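/- arXiv:1705.07597 — 5 statements merged into one kernel-verified Lean document; each statement's English description precedes it below -/
import Mathlib

section
/- Let H be a Hermitian d×d complex matrix and let A, B, C, D be d×d complex matrices. Then the limit lim_{τ→∞} (1/τ) ∫₀^τ ⟨A e^{iHt} B e^{−iHt} C e^{iHt} D e^{−iHt}⟩ dt exists and equals (1/d) Σ_{p,q,r,s : E_p + E_r = E_q + E_s} A_{pq} B_{qr} C_{rs} D_{sp}, where the sum runs over all quadruples of indices (p,q,r,s) in {1,…,d}⁴ whose eigenvalues satisfy E_p + E_r = E_q + E_s. -/
open Matrix Filter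
open scoped Classical

/-- normalized trace -/
noncomputable def nTrace {d : ℕ} (X : Matrix (Fin d) (Fin d) ℂ) : ℂ := X.trace / d

/-- Heisenberg time evolution X ↦ e^{iHt} X e^{-iHt} -/
noncomputable def timeEv {d : ℕ} (H : Matrix (Fin d) (Fin d) ℂ) (t : ℝ)
    (X : Matrix (Fin d) (Fin d) ℂ) : Matrix (Fin d) (Fin d) ℂ :=
  NormedSpace.exp ((Complex.I * t) • H) * X * NormedSpace.exp ((-(Complex.I * t)) • H)

lemma avg_exp (ω : ℝ) (c : ℂ) :
    Tendsto (fun τ : ℝ => (τ : ℂ)⁻¹ * ∫ t in (0:ℝ)..τ, c * Complex.exp (Complex.I * ω * t)) atTop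
      (nhds (if ω = 0 then c else 0)) := by
  by_cases hω : ω = 0
  · simp only [hω, if_pos rfl, Complex.ofReal_zero, mul_zero, zero_mul, Complex.exp_zero, mul_one]
    have h1 : ∀ᶠ τ : ℝ in atTop,
        (fun τ : ℝ => (τ : ℂ)⁻¹ * ∫ t in (0:ℝ)..τ, c) τ = c := by
      filter_upwards [eventually_ge_atTop (1:ℝ)] with τ hτ
      have hτ0 : (τ : ℂ) ≠ 0 := by
        exact_mod_cast ne_of_gt (lt_of_lt_of_le one_pos hτ)
      rw [intervalIntegral.integral_const]
      simp only [sub_zero, Complex.real_smul]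
      field_simp
    exact tendsto_const_nhds.congr' (Filter.EventuallyEq.symm h1)
  · rw [if_neg hω]
    have hc : Complex.I * ω ≠ 0 := by
      simp [Complex.I_ne_zero, Complex.ofReal_eq_zero, hω]
    have hint : ∀ τ : ℝ, (∫ t in (0:ℝ)..τ, c * Complex.exp (Complex.I * ω * t))
        = c * ((Complex.exp (Complex.I * ω * τ) - 1) / (Complex.I * ω)) := by
      intro τ
      rw [intervalIntegral.integral_const_mul, integral_exp_mul_complex hc]
      simp
    apply squeeze_zero_norm (a := fun τ : ℝ => |τ|⁻¹ * (‖c‖ * (2 / ‖Complex.I * (ω:ℂ)‖)))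
    · intro τ
      rw [hint, norm_mul, norm_mul, norm_div, norm_inv, Complex.norm_real, Real.norm_eq_abs]
      gcongr
      calc ‖Complex.exp (Complex.I * ω * τ) - 1‖
          ≤ ‖Complex.exp (Complex.I * ω * τ)‖ + ‖(1:ℂ)‖ := norm_sub_le _ _
        _ ≤ 2 := by
            rw [Complex.norm_exp]
            simp
            norm_num
    · have h2 : Tendsto (fun τ : ℝ => |τ|⁻¹) atTop (nhds 0) :=
        tendsto_abs_atTop_atTop.inv_tendsto_atTop
      have h3 := h2.mul_const (‖c‖ * (2 / ‖Complex.I * (ω:ℂ)‖))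
      rw [zero_mul] at h3
      exact h3

lemma sum3_rev {d : ℕ} (f : Fin d → Fin d → Fin d → ℂ) :
    (∑ q : Fin d, ∑ r : Fin d, ∑ s : Fin d, f s r q)
      = ∑ q : Fin d, ∑ r : Fin d, ∑ s : Fin d, f q r s :=
  calc (∑ q : Fin d, ∑ r : Fin d, ∑ s : Fin d, f s r q)
      = ∑ q : Fin d, ∑ s : Fin d, ∑ r : Fin d, f s r q :=
        Finset.sum_congr rfl fun _ _ => Finset.sum_comm
    _ = ∑ s : Fin d, ∑ q : Fin d, ∑ r : Fin d, f s r q := Finset.sum_comm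
    _ = ∑ s : Fin d, ∑ r : Fin d, ∑ q : Fin d, f s r q :=
        Finset.sum_congr rfl fun _ _ => Finset.sum_comm

lemma trace_four {d : ℕ} (M₁ M₂ M₃ M₄ : Matrix (Fin d) (Fin d) ℂ) :
    (M₁ * M₂ * M₃ * M₄).trace
      = ∑ p, ∑ q, ∑ r, ∑ s, M₁ p q * M₂ q r * M₃ r s * M₄ s p := by
  simp only [Matrix.trace, Matrix.diag, Matrix.mul_apply, Finset.sum_mul, Finset.mul_sum]
  refine Finset.sum_congr rfl fun p _ => ?_
  exact sum3_rev (fun q r s => M₁ p q * M₂ q r * M₃ r s * M₄ s p)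

theorem stmt2 (d : ℕ) (H : Matrix (Fin d) (Fin d) ℂ)
    (U : Matrix (Fin d) (Fin d) ℂ) (hU : U ∈ Matrix.unitaryGroup (Fin d) ℂ)
    (E : Fin d → ℝ) (hH : H = U * Matrix.diagonal (fun j => (E j : ℂ)) * Uᴴ)
    (A B C D : Matrix (Fin d) (Fin d) ℂ) :
    Tendsto (fun τ : ℝ => (τ : ℂ)⁻¹ * ∫ t in (0:ℝ)..τ,
        nTrace (A * timeEv H t B * C * timeEv H t D)) atTop
      (nhds ((1 / d) * ∑ p : Fin d, ∑ q : Fin d, ∑ r : Fin d, ∑ s : Fin d,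
        if E p + E r = E q + E s then
          (Uᴴ * A * U) p q * (Uᴴ * B * U) q r * (Uᴴ * C * U) r s * (Uᴴ * D * U) s p
        else 0)) := by
  have h1 : Uᴴ * U = 1 := by
    have := hU.1
    rwa [Matrix.star_eq_conjTranspose] at this
  have h2 : U * Uᴴ = 1 := by
    have := hU.2
    rwa [Matrix.star_eq_conjTranspose] at this
  have hUnit : IsUnit U := ⟨⟨U, Uᴴ, h2, h1⟩, rfl⟩
  have hinv : U⁻¹ = Uᴴ := Matrix.inv_eq_left_inv h1
  -- exponential of (z • H)
  have hexp : ∀ z : ℂ, NormedSpace.exp (z • H)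
      = U * Matrix.diagonal (fun j => Complex.exp (z * E j)) * Uᴴ := by
    intro z
    have hz : z • H = U * Matrix.diagonal (fun j => z * (E j : ℂ)) * U⁻¹ := by
      rw [hinv, hH]
      rw [show (Matrix.diagonal fun j => z * (E j : ℂ))
          = z • Matrix.diagonal (fun j => (E j : ℂ)) by
        rw [← Matrix.diagonal_smul]; congr 1]
      rw [Matrix.mul_smul, Matrix.smul_mul]
    rw [hz, Matrix.exp_conj U _ hUnit, Matrix.exp_diagonal, hinv]
    congr 2
    rw [Pi.exp_def]
    simp only [← Complex.exp_eq_exp_ℂ]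
  -- key pointwise identity
  have key : ∀ t : ℝ, nTrace (A * timeEv H t B * C * timeEv H t D)
      = ∑ x : Fin d × Fin d × Fin d × Fin d,
          ((d:ℂ)⁻¹ * ((Uᴴ*A*U) x.1 x.2.1 * (Uᴴ*B*U) x.2.1 x.2.2.1 *
            (Uᴴ*C*U) x.2.2.1 x.2.2.2 * (Uᴴ*D*U) x.2.2.2 x.1)) *
          Complex.exp (Complex.I *
            ((E x.2.1 - E x.2.2.1 + E x.2.2.2 - E x.1 : ℝ) : ℂ) * t) := by
    intro t
    have e1 := hexp (Complex.I * t)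
    have e2 := hexp (-(Complex.I * t))
    have hprod : A * timeEv H t B * C * timeEv H t D
        = ((A * U) * (Matrix.diagonal (fun j => Complex.exp (Complex.I * t * E j)) *
            (Uᴴ * B * U) * Matrix.diagonal (fun j => Complex.exp (-(Complex.I * t) * E j)))
          * (Uᴴ * C * U)
          * (Matrix.diagonal (fun j => Complex.exp (Complex.I * t * E j)) *
            (Uᴴ * D * U) * Matrix.diagonal (fun j => Complex.exp (-(Complex.I * t) * E j)))) * Uᴴ := by
      simp only [timeEv, e1, e2, Matrix.mul_assoc]
    have htr : (A * timeEv H t B * C * timeEv H t D).trace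
        = ((Uᴴ * A * U) *
            (Matrix.diagonal (fun j => Complex.exp (Complex.I * t * E j)) *
              (Uᴴ * B * U) * Matrix.diagonal (fun j => Complex.exp (-(Complex.I * t) * E j)))
          * (Uᴴ * C * U)
          * (Matrix.diagonal (fun j => Complex.exp (Complex.I * t * E j)) *
              (Uᴴ * D * U) * Matrix.diagonal (fun j => Complex.exp (-(Complex.I * t) * E j)))).trace := by
      rw [hprod, Matrix.trace_mul_comm]
      congr 1
      simp only [Matrix.mul_assoc]
    rw [nTrace, htr, trace_four]
    rw [Fintype.sum_prod_type]
    rw [div_eq_mul_inv, mul_comm, Finset.mul_sum]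
    refine Finset.sum_congr rfl fun p _ => ?_
    rw [Fintype.sum_prod_type, Finset.mul_sum]
    refine Finset.sum_congr rfl fun q _ => ?_
    rw [Fintype.sum_prod_type, Finset.mul_sum]
    refine Finset.sum_congr rfl fun r _ => ?_
    rw [Finset.mul_sum]
    refine Finset.sum_congr rfl fun s _ => ?_
    simp only [Matrix.diagonal_mul, Matrix.mul_diagonal]
    rw [show Complex.I * ((E q - E r + E s - E p : ℝ) : ℂ) * t
        = (Complex.I * t * E q) + (-(Complex.I * t) * E r) +
          ((Complex.I * t * E s) + (-(Complex.I * t) * E p)) by push_cast; ring]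
    rw [Complex.exp_add, Complex.exp_add, Complex.exp_add]
    ring
  -- continuity / integrability of each term
  have hcont : ∀ (c : ℂ) (ω : ℝ) (a b : ℝ), IntervalIntegrable
      (fun t : ℝ => c * Complex.exp (Complex.I * ω * t)) MeasureTheory.volume a b := by
    intro c ω a b
    apply Continuous.intervalIntegrable
    exact continuous_const.mul (Complex.continuous_exp.comp
      ((continuous_const.mul Complex.continuous_ofReal)))
  have swap : ∀ τ : ℝ, (τ:ℂ)⁻¹ * (∫ t in (0:ℝ)..τ, nTrace (A * timeEv H t B * C * timeEv H t D))
      = ∑ x : Fin d × Fin d × Fin d × Fin d, (τ:ℂ)⁻¹ * ∫ t in (0:ℝ)..τ,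
          ((d:ℂ)⁻¹ * ((Uᴴ*A*U) x.1 x.2.1 * (Uᴴ*B*U) x.2.1 x.2.2.1 *
            (Uᴴ*C*U) x.2.2.1 x.2.2.2 * (Uᴴ*D*U) x.2.2.2 x.1)) *
          Complex.exp (Complex.I *
            ((E x.2.1 - E x.2.2.1 + E x.2.2.2 - E x.1 : ℝ) : ℂ) * t) := by
    intro τ
    simp only [key]
    rw [intervalIntegral.integral_finset_sum (fun x _ => hcont _ _ _ _), Finset.mul_sum]
  have main := tendsto_finset_sum (Finset.univ : Finset (Fin d × Fin d × Fin d × Fin d))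
    (fun x _ => avg_exp (E x.2.1 - E x.2.2.1 + E x.2.2.2 - E x.1)
      ((d:ℂ)⁻¹ * ((Uᴴ*A*U) x.1 x.2.1 * (Uᴴ*B*U) x.2.1 x.2.2.1 *
        (Uᴴ*C*U) x.2.2.1 x.2.2.2 * (Uᴴ*D*U) x.2.2.2 x.1)))
  have lim_eq : (∑ x : Fin d × Fin d × Fin d × Fin d,
      if (E x.2.1 - E x.2.2.1 + E x.2.2.2 - E x.1) = 0 then
        ((d:ℂ)⁻¹ * ((Uᴴ*A*U) x.1 x.2.1 * (Uᴴ*B*U) x.2.1 x.2.2.1 *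
          (Uᴴ*C*U) x.2.2.1 x.2.2.2 * (Uᴴ*D*U) x.2.2.2 x.1)) else 0)
      = (1 / d) * ∑ p : Fin d, ∑ q : Fin d, ∑ r : Fin d, ∑ s : Fin d,
        if E p + E r = E q + E s then
          (Uᴴ * A * U) p q * (Uᴴ * B * U) q r * (Uᴴ * C * U) r s * (Uᴴ * D * U) s p
        else 0 := by
    rw [one_div, Finset.mul_sum]
    rw [Fintype.sum_prod_type]
    refine Finset.sum_congr rfl fun p _ => ?_
    rw [Fintype.sum_prod_type, Finset.mul_sum]
    refine Finset.sum_congr rfl fun q _ => ?_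
    rw [Fintype.sum_prod_type, Finset.mul_sum]
    refine Finset.sum_congr rfl fun r _ => ?_
    rw [Finset.mul_sum]
    refine Finset.sum_congr rfl fun s _ => ?_
    rw [mul_ite, mul_zero]
    exact if_congr (by constructor <;> intro h <;> linarith) rfl rfl
  rw [← lim_eq]
  exact main.congr (fun τ => (swap τ).symm)
end

section
/- Let H be a Hermitian d×d complex matrix whose spectrum is generic, and let A, B, C, D be d×d complex matrices. Then lim_{τ→∞} (1/τ) ∫₀^τ ⟨A e^{iHt} B e^{−iHt} C e^{iHt} D e^{−iHt}⟩ dt = (1/d) Σ_{j,k} A_{jj} B_{jk} C_{kk} D_{kj} + (1/d) Σ_{j,k} A_{jk} B_{kk} C_{kj} D_{jj} − (1/d) Σ_j A_{jj} B_{jj} C_{jj} D_{jj}. -/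
open Matrix Filter
open scoped Classical

/-- A family of eigenvalues is generic if `E p + E r = E q + E s` only for trivial reasons. -/
def GenericSpectrum {ι : Type*} (E : ι → ℝ) : Prop :=
  ∀ p q r s : ι, E p + E r = E q + E s → (p = q ∧ r = s) ∨ (p = s ∧ r = q)

lemma avg_exp_tendsto (ω : ℝ) :
    Tendsto (fun τ : ℝ => (τ:ℂ)⁻¹ * ∫ t in (0:ℝ)..τ, Complex.exp (Complex.I * ω * t)) atTop
      (nhds (if ω = 0 then 1 else 0)) := by
  rcases eq_or_ne ω 0 with h | h
  · rw [if_pos h]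
    apply Tendsto.congr' _ tendsto_const_nhds
    filter_upwards [eventually_gt_atTop (0:ℝ)] with τ hτ
    simp [h, inv_mul_cancel₀, Complex.ofReal_ne_zero, ne_of_gt hτ]
  · rw [if_neg h]
    have hc : (Complex.I * ω) ≠ 0 := by
      simp [Complex.I_ne_zero, Complex.ofReal_ne_zero, h]
    have hI : ∀ τ : ℝ, (∫ t in (0:ℝ)..τ, Complex.exp (Complex.I * ω * t))
        = (Complex.exp (Complex.I * ω * τ) - 1) / (Complex.I * ω) := by
      intro τ
      rw [integral_exp_mul_complex hc]
      simp
    apply squeeze_zero_norm' (a := fun τ : ℝ => τ⁻¹ * (2 / ‖Complex.I * (ω:ℂ)‖))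
    · filter_upwards [eventually_gt_atTop (0:ℝ)] with τ hτ
      rw [hI]
      rw [norm_mul, norm_div]
      have h1 : ‖(τ:ℂ)⁻¹‖ = τ⁻¹ := by
        rw [norm_inv, Complex.norm_real, Real.norm_of_nonneg hτ.le]
      rw [h1]
      apply mul_le_mul_of_nonneg_left _ (inv_nonneg.2 hτ.le)
      gcongr
      calc ‖Complex.exp (Complex.I * ω * τ) - 1‖
          ≤ ‖Complex.exp (Complex.I * ω * τ)‖ + ‖(1:ℂ)‖ := norm_sub_le _ _
        _ ≤ 2 := by
          have : ‖Complex.exp (Complex.I * ω * τ)‖ = 1 := by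
            rw [Complex.norm_exp]
            have : (Complex.I * ω * τ).re = 0 := by simp
            rw [this, Real.exp_zero]
          rw [this]
          norm_num
    · have := tendsto_inv_atTop_zero (𝕜 := ℝ) |>.mul_const (2 / ‖Complex.I * (ω:ℂ)‖)
      simpa using this

lemma exp_smul_conj {d : ℕ} (U : Matrix (Fin d) (Fin d) ℂ)
    (h1 : U * Uᴴ = 1) (h2 : Uᴴ * U = 1) (E : Fin d → ℝ) (c : ℂ) :
    NormedSpace.exp (c • (U * Matrix.diagonal (fun j => (E j : ℂ)) * Uᴴ))
      = U * Matrix.diagonal (fun j => Complex.exp (c * E j)) * Uᴴ := by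
  have hs : c • (U * Matrix.diagonal (fun j => (E j : ℂ)) * Uᴴ)
      = U * Matrix.diagonal (fun j => c * E j) * Uᴴ := by
    rw [← Matrix.smul_mul, ← Matrix.mul_smul, ← Matrix.diagonal_smul]
    rfl
  rw [hs]
  let V : (Matrix (Fin d) (Fin d) ℂ)ˣ := ⟨U, Uᴴ, h1, h2⟩
  have hV : (↑V⁻¹ : Matrix (Fin d) (Fin d) ℂ) = Uᴴ := rfl
  have := Matrix.exp_units_conj V (Matrix.diagonal (fun j => c * E j))
  rw [hV] at this
  rw [show (↑V : Matrix (Fin d) (Fin d) ℂ) = U from rfl] at this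
  rw [this, Matrix.exp_diagonal, Pi.exp_def]
  simp [← Complex.exp_eq_exp_ℂ]

lemma trace4 {d : ℕ} (W X Y Z : Matrix (Fin d) (Fin d) ℂ) :
    (W * X * Y * Z).trace = ∑ j, ∑ k, ∑ l, ∑ m, W j k * X k l * Y l m * Z m j := by
  simp only [Matrix.trace, Matrix.diag, Matrix.mul_apply, Finset.sum_mul, Finset.mul_sum]
  refine Finset.sum_congr rfl fun j _ => ?_
  refine (Finset.sum_congr rfl fun m _ => Finset.sum_comm).trans ?_
  rw [Finset.sum_comm]
  exact Finset.sum_congr rfl fun k _ => Finset.sum_comm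

lemma integrand_eq {d : ℕ} (U : Matrix (Fin d) (Fin d) ℂ)
    (h1 : U * Uᴴ = 1) (h2 : Uᴴ * U = 1) (E : Fin d → ℝ)
    (A B C D : Matrix (Fin d) (Fin d) ℂ) (t : ℝ) :
    nTrace (A * timeEv (U * Matrix.diagonal (fun j => (E j : ℂ)) * Uᴴ) t B * C
        * timeEv (U * Matrix.diagonal (fun j => (E j : ℂ)) * Uᴴ) t D)
      = ∑ q : Fin d × Fin d × Fin d × Fin d,
          ((Uᴴ * A * U) q.1 q.2.1 * (Uᴴ * B * U) q.2.1 q.2.2.1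
            * (Uᴴ * C * U) q.2.2.1 q.2.2.2 * (Uᴴ * D * U) q.2.2.2 q.1 / d)
          * Complex.exp (Complex.I * ((E q.2.1 - E q.2.2.1 + E q.2.2.2 - E q.1 : ℝ) : ℂ) * (t : ℂ)) := by
  set Gp := Matrix.diagonal (fun j => Complex.exp ((Complex.I * t) * E j)) with hGp
  set Gm := Matrix.diagonal (fun j => Complex.exp ((-(Complex.I * t)) * E j)) with hGm
  have hB : timeEv (U * Matrix.diagonal (fun j => (E j : ℂ)) * Uᴴ) t B
      = U * Gp * Uᴴ * B * (U * Gm * Uᴴ) := by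
    unfold timeEv
    rw [exp_smul_conj U h1 h2 E (Complex.I * t), exp_smul_conj U h1 h2 E (-(Complex.I * t))]
  have hD : timeEv (U * Matrix.diagonal (fun j => (E j : ℂ)) * Uᴴ) t D
      = U * Gp * Uᴴ * D * (U * Gm * Uᴴ) := by
    unfold timeEv
    rw [exp_smul_conj U h1 h2 E (Complex.I * t), exp_smul_conj U h1 h2 E (-(Complex.I * t))]
  have htr : (A * timeEv (U * Matrix.diagonal (fun j => (E j : ℂ)) * Uᴴ) t B * C
        * timeEv (U * Matrix.diagonal (fun j => (E j : ℂ)) * Uᴴ) t D).trace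
      = ((Uᴴ * A * U * Gp) * (Uᴴ * B * U * Gm) * (Uᴴ * C * U * Gp) * (Uᴴ * D * U * Gm)).trace := by
    rw [hB, hD]
    rw [show A * (U * Gp * Uᴴ * B * (U * Gm * Uᴴ)) * C * (U * Gp * Uᴴ * D * (U * Gm * Uᴴ))
        = (A * (U * (Gp * (Uᴴ * (B * (U * (Gm * (Uᴴ * (C * (U * (Gp * (Uᴴ * (D * (U * Gm)))))))))))))) * Uᴴ
        from by simp only [Matrix.mul_assoc]]
    rw [Matrix.trace_mul_comm]
    simp only [Matrix.mul_assoc]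
  unfold nTrace
  rw [htr, trace4]
  simp only [Fintype.sum_prod_type, Finset.sum_div]
  refine Finset.sum_congr rfl fun j _ => ?_
  refine Finset.sum_congr rfl fun k _ => ?_
  refine Finset.sum_congr rfl fun l _ => ?_
  refine Finset.sum_congr rfl fun m _ => ?_
  rw [hGp, hGm]
  simp only [Matrix.mul_diagonal]
  rw [show Complex.I * ((E k - E l + E m - E j : ℝ) : ℂ) * (t : ℂ)
      = (Complex.I * t) * E k + ((-(Complex.I * t)) * E l + ((Complex.I * t) * E m + (-(Complex.I * t)) * E j))
      from by push_cast; ring]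
  rw [Complex.exp_add, Complex.exp_add, Complex.exp_add]
  ring

theorem stmt3 (d : ℕ) (H : Matrix (Fin d) (Fin d) ℂ)
    (U : Matrix (Fin d) (Fin d) ℂ) (hU : U ∈ Matrix.unitaryGroup (Fin d) ℂ)
    (E : Fin d → ℝ) (hH : H = U * Matrix.diagonal (fun j => (E j : ℂ)) * Uᴴ)
    (hgen : GenericSpectrum E)
    (A B C D : Matrix (Fin d) (Fin d) ℂ) :
    Tendsto (fun τ : ℝ => (τ : ℂ)⁻¹ * ∫ t in (0:ℝ)..τ,
        nTrace (A * timeEv H t B * C * timeEv H t D)) atTop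
      (nhds ((1 / d) * ∑ j : Fin d, ∑ k : Fin d,
          (Uᴴ * A * U) j j * (Uᴴ * B * U) j k * (Uᴴ * C * U) k k * (Uᴴ * D * U) k j
        + (1 / d) * ∑ j : Fin d, ∑ k : Fin d,
          (Uᴴ * A * U) j k * (Uᴴ * B * U) k k * (Uᴴ * C * U) k j * (Uᴴ * D * U) j j
        - (1 / d) * ∑ j : Fin d,
          (Uᴴ * A * U) j j * (Uᴴ * B * U) j j * (Uᴴ * C * U) j j * (Uᴴ * D * U) j j)) := by
  have h1 : U * Uᴴ = 1 := by
    have := (Matrix.mem_unitaryGroup_iff).1 hU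
    simpa [Matrix.star_eq_conjTranspose] using this
  have h2 : Uᴴ * U = 1 := by
    have := (Matrix.mem_unitaryGroup_iff').1 hU
    simpa [Matrix.star_eq_conjTranspose] using this
  set A' := Uᴴ * A * U
  set B' := Uᴴ * B * U
  set C' := Uᴴ * C * U
  set D' := Uᴴ * D * U
  set c : Fin d × Fin d × Fin d × Fin d → ℂ := fun q =>
    A' q.1 q.2.1 * B' q.2.1 q.2.2.1 * C' q.2.2.1 q.2.2.2 * D' q.2.2.2 q.1 / d with hc
  set ω : Fin d × Fin d × Fin d × Fin d → ℝ := fun q =>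
    E q.2.1 - E q.2.2.1 + E q.2.2.2 - E q.1 with hω
  have hfun : (fun τ : ℝ => (τ : ℂ)⁻¹ * ∫ t in (0:ℝ)..τ,
        nTrace (A * timeEv H t B * C * timeEv H t D))
      = fun τ : ℝ => ∑ q : Fin d × Fin d × Fin d × Fin d,
          c q * ((τ : ℂ)⁻¹ * ∫ t in (0:ℝ)..τ, Complex.exp (Complex.I * (ω q) * t)) := by
    funext τ
    rw [hH]
    simp only [integrand_eq U h1 h2 E A B C D]
    rw [intervalIntegral.integral_finset_sum]
    · rw [Finset.mul_sum]
      refine Finset.sum_congr rfl fun q _ => ?_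
      rw [intervalIntegral.integral_const_mul]
      ring
    · intro q _
      apply Continuous.intervalIntegrable
      fun_prop
  rw [hfun]
  have hlim := tendsto_finset_sum (Finset.univ : Finset (Fin d × Fin d × Fin d × Fin d))
    (fun q _ => (avg_exp_tendsto (ω q)).const_mul (c q))
  have hiff : ∀ q : Fin d × Fin d × Fin d × Fin d, (ω q = 0) ↔
      ((q.2.2.2 = q.1 ∧ q.2.1 = q.2.2.1) ∨ (q.2.1 = q.1 ∧ q.2.2.2 = q.2.2.1)) := by
    rintro ⟨j, k, l, m⟩
    simp only [hω]
    constructor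
    · intro h0
      have h5 : E k + E m = E l + E j := by linarith
      rcases hgen k l m j h5 with ⟨h6, h7⟩ | ⟨h6, h7⟩
      · exact Or.inl ⟨h7, h6⟩
      · exact Or.inr ⟨h6, h7⟩
    · rintro (⟨h3, h4⟩ | ⟨h3, h4⟩) <;> (rw [h3, h4]; ring)
  have hval : (∑ q : Fin d × Fin d × Fin d × Fin d, c q * if ω q = 0 then 1 else 0)
      = ((1 / d) * ∑ j : Fin d, ∑ k : Fin d,
          A' j j * B' j k * C' k k * D' k j
        + (1 / d) * ∑ j : Fin d, ∑ k : Fin d,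
          A' j k * B' k k * C' k j * D' j j
        - (1 / d) * ∑ j : Fin d,
          A' j j * B' j j * C' j j * D' j j) := by
    have hsplit : ∀ q : Fin d × Fin d × Fin d × Fin d,
        (c q * if ω q = 0 then 1 else 0)
        = ((if q.2.2.2 = q.1 ∧ q.2.1 = q.2.2.1 then c q else 0)
          + (if q.2.1 = q.1 ∧ q.2.2.2 = q.2.2.1 then c q else 0))
          - (if (q.2.2.2 = q.1 ∧ q.2.1 = q.2.2.1) ∧ (q.2.1 = q.1 ∧ q.2.2.2 = q.2.2.1)
              then c q else 0) := by
      intro q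
      rw [if_congr (hiff q) rfl rfl]
      by_cases hp : q.2.2.2 = q.1 ∧ q.2.1 = q.2.2.1 <;>
        by_cases hq : q.2.1 = q.1 ∧ q.2.2.2 = q.2.2.1 <;>
        simp [hp, hq]
    rw [Finset.sum_congr rfl (fun q _ => hsplit q), Finset.sum_sub_distrib,
      Finset.sum_add_distrib]
    congr 1
    · rw [add_comm]
      congr 1
      · simp only [Fintype.sum_prod_type, ite_and, Finset.sum_ite_irrel, Finset.sum_const_zero, Finset.sum_ite_eq, Finset.sum_ite_eq',
          Finset.mem_univ, if_true, hc]
        rw [Finset.mul_sum]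
        refine Finset.sum_congr rfl fun j _ => ?_
        rw [Finset.mul_sum]
        refine Finset.sum_congr rfl fun k _ => ?_
        ring
      · simp only [Fintype.sum_prod_type, ite_and, Finset.sum_ite_irrel, Finset.sum_const_zero, Finset.sum_ite_eq, Finset.sum_ite_eq',
          Finset.mem_univ, if_true, hc]
        rw [Finset.mul_sum]
        refine Finset.sum_congr rfl fun j _ => ?_
        rw [Finset.mul_sum]
        refine Finset.sum_congr rfl fun k _ => ?_
        ring
    · simp only [Fintype.sum_prod_type, ite_and, Finset.sum_ite_irrel, Finset.sum_const_zero, Finset.sum_ite_eq, Finset.sum_ite_eq',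
        Finset.mem_univ, if_true, hc]
      rw [Finset.mul_sum]
      refine Finset.sum_congr rfl fun j _ => ?_
      ring
  rw [← hval]
  exact hlim
end

section
/- For every positive integer m there exists a constant C_m > 0 (depending only on m) such that for every n ≥ 3 and every nearest-neighbor Hamiltonian H = Σ_{i∈ℤ/nℤ} H_i on n qubits with tr H_i = 0 and ‖H_i‖ ≤ 1 for all i, one has |tr(H^m)|/2^n ≤ C_m n^{⌊m/2⌋}. -/
open Matrix Filter Finset
open scoped Classical

/-- computational basis configurations of `n` qubits -/
abbrev Cfg (n : ℕ) := Fin n → Fin 2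

/-- the site following `i` in the cyclic order on `ℤ/nℤ` -/
def nxt {n : ℕ} (i : Fin n) : Fin n :=
  ⟨(i.1 + 1) % n, Nat.mod_lt _ (Nat.lt_of_le_of_lt (Nat.zero_le _) i.2)⟩

/-- the operator acting as the 4×4 matrix `h` on the two neighboring sites `i, i+1`
and as the identity elsewhere -/
noncomputable def twoSite (n : ℕ) (i : Fin n)
    (h : Matrix (Fin 2 × Fin 2) (Fin 2 × Fin 2) ℂ) : Matrix (Cfg n) (Cfg n) ℂ :=
  fun x y =>
    if ∀ j : Fin n, j ≠ i → j ≠ nxt i → x j = y j then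
      h (x i, x (nxt i)) (y i, y (nxt i))
    else 0

/-- the ℓ²→ℓ² operator norm of a matrix -/
noncomputable def opNorm {d : Type*} [Fintype d] [DecidableEq d] (X : Matrix d d ℂ) : ℝ :=
  ‖LinearMap.toContinuousLinearMap (Matrix.toEuclideanLin X)‖

section Supp
variable {n : ℕ}

/-- `x` and `y` agree off `p` -/
def Off (p : Fin n → Prop) (x y : Cfg n) : Prop := ∀ j, ¬ p j → x j = y j

/-- `X` is supported on sites in `p` -/
def SuppOn (p : Fin n → Prop) (X : Matrix (Cfg n) (Cfg n) ℂ) : Prop :=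
  (∀ x y, ¬ Off p x y → X x y = 0) ∧
  (∀ x y x' y', (∀ j, p j → x j = x' j) → (∀ j, p j → y j = y' j) →
     Off p x y → Off p x' y' → X x y = X x' y')

lemma suppOn_twoSite (i : Fin n) (h : Matrix (Fin 2 × Fin 2) (Fin 2 × Fin 2) ℂ) :
    SuppOn (fun j => j = i ∨ j = nxt i) (twoSite n i h) := by
  constructor
  · intro x y hxy
    rw [twoSite, if_neg]
    intro hc
    exact hxy (fun j hj => hc j (fun e => hj (Or.inl e)) (fun e => hj (Or.inr e)))
  · intro x y x' y' hx hy hOff hOff'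
    have hcond : ∀ j : Fin n, j ≠ i → j ≠ nxt i → x j = y j :=
      fun j h1 h2 => hOff j (by rintro (rfl | rfl) <;> simp_all)
    have hcond' : ∀ j : Fin n, j ≠ i → j ≠ nxt i → x' j = y' j :=
      fun j h1 h2 => hOff' j (by rintro (rfl | rfl) <;> simp_all)
    rw [twoSite, twoSite, if_pos hcond, if_pos hcond',
      hx i (Or.inl rfl), hx (nxt i) (Or.inr rfl), hy i (Or.inl rfl), hy (nxt i) (Or.inr rfl)]

lemma suppOn_mono {p q : Fin n → Prop} (hpq : ∀ j, p j → q j) {X : Matrix (Cfg n) (Cfg n) ℂ}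
    (hX : SuppOn p X) : SuppOn q X := by
  constructor
  · intro x y hxy
    refine hX.1 x y (fun hc => hxy (fun j hj => hc j (fun e => hj (hpq j e))))
  · intro x y x' y' hx hy hOff hOff'
    by_cases hOp : Off p x y
    · refine hX.2 x y x' y' (fun j hj => hx j (hpq j hj)) (fun j hj => hy j (hpq j hj)) hOp ?_
      intro j hj
      by_cases hq : q j
      · rw [← hx j hq, ← hy j hq]; exact hOp j hj
      · exact hOff' j hq
    · simp only [Off, not_forall] at hOp
      obtain ⟨j, hj, hne⟩ := hOp
      have hq : q j := by
        by_contra hq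
        exact hne (hOff j hq)
      rw [hX.1 x y (by intro hc; exact hne (hc j hj)),
        hX.1 x' y' (by intro hc; exact hne (by rw [hx j hq, hy j hq]; exact hc j hj))]

lemma suppOn_one (p : Fin n → Prop) : SuppOn p (1 : Matrix (Cfg n) (Cfg n) ℂ) := by
  constructor
  · intro x y hxy
    rw [Matrix.one_apply, if_neg]
    rintro rfl
    exact hxy (fun j _ => rfl)
  · intro x y x' y' hx hy hOff hOff'
    rw [Matrix.one_apply, Matrix.one_apply]
    congr 1
    simp only [eq_iff_iff, funext_iff]
    constructor
    · intro hh j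
      by_cases hp : p j
      · rw [← hx j hp, ← hy j hp]; exact hh j
      · exact hOff' j hp
    · intro hh j
      by_cases hp : p j
      · rw [hx j hp, hy j hp]; exact hh j
      · exact hOff j hp

lemma suppOn_mul {p : Fin n → Prop} {X Y : Matrix (Cfg n) (Cfg n) ℂ}
    (hX : SuppOn p X) (hY : SuppOn p Y) : SuppOn p (X * Y) := by
  constructor
  · intro x y hxy
    simp only [Off, not_forall] at hxy
    obtain ⟨j, hj, hne⟩ := hxy
    rw [Matrix.mul_apply]
    refine Finset.sum_eq_zero (fun z _ => ?_)
    by_cases hz : z j = x j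
    · rw [hY.1 z y (fun hc => hne (hz ▸ hc j hj)), mul_zero]
    · rw [hX.1 x z (fun hc => hz (hc j hj).symm), zero_mul]
  · intro x y x' y' hx hy hOff hOff'
    rw [Matrix.mul_apply, Matrix.mul_apply]
    have h1 : ∀ z ∈ (Finset.univ : Finset (Cfg n)), X x z * Y z y ≠ 0 → Off p x z := by
      intro z _ hz
      by_contra hc
      exact hz (by rw [hX.1 x z hc, zero_mul])
    have h2 : ∀ z ∈ (Finset.univ : Finset (Cfg n)), X x' z * Y z y' ≠ 0 → Off p x' z := by
      intro z _ hz
      by_contra hc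
      exact hz (by rw [hX.1 x' z hc, zero_mul])
    rw [← Finset.sum_filter_of_ne h1, ← Finset.sum_filter_of_ne h2]
    refine Finset.sum_nbij' (fun z => fun j => if p j then z j else x' j)
      (fun z => fun j => if p j then z j else x j) ?_ ?_ ?_ ?_ ?_
    · intro z hz
      simp only [Finset.mem_filter, Finset.mem_univ, true_and] at hz ⊢
      intro j hj
      simp [hj]
    · intro z hz
      simp only [Finset.mem_filter, Finset.mem_univ, true_and] at hz ⊢
      intro j hj
      simp [hj]
    · intro z hz
      simp only [Finset.mem_filter, Finset.mem_univ, true_and] at hz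
      funext j
      by_cases hp : p j
      · simp [hp]
      · simp [hp, (hz j hp).symm]
    · intro z hz
      simp only [Finset.mem_filter, Finset.mem_univ, true_and] at hz
      funext j
      by_cases hp : p j
      · simp [hp]
      · simp [hp, (hz j hp).symm]
    · intro z hz
      simp only [Finset.mem_filter, Finset.mem_univ, true_and] at hz
      have e1 : X x z = X x' (fun j => if p j then z j else x' j) := by
        refine hX.2 x z x' _ hx (fun j hj => by simp [hj]) hz (fun j hj => by simp [hj])
      have e2 : Y z y = Y (fun j => if p j then z j else x' j) y' := by
        refine hY.2 z y _ y' (fun j hj => by simp [hj]) hy ?_ ?_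
        · intro j hj
          rw [← hz j hj]
          exact hOff j hj
        · intro j hj
          simp only [hj, if_false]
          exact hOff' j hj
      rw [e1, e2]

lemma suppOn_list_prod {p : Fin n → Prop} (l : List (Matrix (Cfg n) (Cfg n) ℂ))
    (hl : ∀ Y ∈ l, SuppOn p Y) : SuppOn p l.prod := by
  induction l with
  | nil => simpa using suppOn_one p
  | cons a l ih =>
    rw [List.prod_cons]
    exact suppOn_mul (hl a (List.mem_cons_self)) (ih (fun Y hY => hl Y (List.mem_cons_of_mem a hY)))

end Supp

section Supp2
variable {n : ℕ}
lemma mul_apply_disjoint {p q : Fin n → Prop} {X Y : Matrix (Cfg n) (Cfg n) ℂ}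
    (hX : SuppOn p X) (hY : SuppOn q Y) (hd : ∀ j, ¬ (p j ∧ q j)) (x y : Cfg n) :
    (X * Y) x y = if Off (fun j => p j ∨ q j) x y then
      X x (fun j => if p j then y j else x j) * Y (fun j => if p j then y j else x j) y
      else 0 := by
  rw [Matrix.mul_apply]
  split_ifs with hOff
  · refine Finset.sum_eq_single _ ?_ (by simp)
    intro z _ hz
    have : ∃ j, z j ≠ if p j then y j else x j := by
      by_contra hc
      push_neg at hc
      exact hz (funext hc)
    obtain ⟨j, hj⟩ := this
    by_cases hp : p j
    · rw [hY.1 z y ?_, mul_zero]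
      intro hc
      exact hj (by rw [hc j (fun hq => hd j ⟨hp, hq⟩), if_pos hp])
    · rw [hX.1 x z ?_, zero_mul]
      intro hc
      exact hj (by rw [← hc j hp, if_neg hp])
  · refine Finset.sum_eq_zero (fun z _ => ?_)
    simp only [Off, not_forall] at hOff
    obtain ⟨j, hj⟩ := hOff
    obtain ⟨hj, hne⟩ := hj
    rw [not_or] at hj
    by_cases hz : z j = x j
    · rw [hY.1 z y (fun hc => hne (hz ▸ hc j hj.2)), mul_zero]
    · rw [hX.1 x z (fun hc => hz (hc j hj.1).symm), zero_mul]

lemma commute_of_disjoint {p q : Fin n → Prop} {X Y : Matrix (Cfg n) (Cfg n) ℂ}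
    (hX : SuppOn p X) (hY : SuppOn q Y) (hd : ∀ j, ¬ (p j ∧ q j)) : X * Y = Y * X := by
  ext x y
  rw [mul_apply_disjoint hX hY hd, mul_apply_disjoint hY hX (fun j hc => hd j ⟨hc.2, hc.1⟩)]
  have hiff : Off (fun j => p j ∨ q j) x y ↔ Off (fun j => q j ∨ p j) x y := by
    constructor <;> exact fun hh j hj => hh j (fun hc => hj (Or.symm hc))
  by_cases hOff : Off (fun j => p j ∨ q j) x y
  · rw [if_pos hOff, if_pos (hiff.1 hOff)]
    have e1 : X x (fun j => if p j then y j else x j)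
        = X (fun j => if q j then y j else x j) y := by
      refine hX.2 _ _ _ _ ?_ ?_ ?_ ?_
      · intro j hj
        simp only [if_neg (fun hq => hd j ⟨hj, hq⟩)]
      · intro j hj
        simp only [if_pos hj]
      · intro j hj
        simp only [if_neg hj]
      · intro j hj
        by_cases hq : q j
        · simp only [if_pos hq]
        · simp only [if_neg hq]
          exact hOff j (by rintro (h|h) <;> [exact hj h; exact hq h])
    have e2 : Y (fun j => if p j then y j else x j) y
        = Y x (fun j => if q j then y j else x j) := by
      refine hY.2 _ _ _ _ ?_ ?_ ?_ ?_
      · intro j hj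
        simp only [if_neg (fun hp => hd j ⟨hp, hj⟩)]
      · intro j hj
        simp only [if_pos hj]
      · intro j hj
        by_cases hp : p j
        · simp only [if_pos hp]
        · simp only [if_neg hp]
          exact hOff j (by rintro (h|h) <;> [exact hp h; exact hj h])
      · intro j hj
        simp only [if_neg hj]
    rw [e1, e2]
    ring
  · rw [if_neg hOff, if_neg (fun hc => hOff (hiff.2 hc))]

lemma trace_mul_disjoint {p q : Fin n → Prop} {X Y : Matrix (Cfg n) (Cfg n) ℂ}
    (hX : SuppOn p X) (hY : SuppOn q Y) (hd : ∀ j, ¬ (p j ∧ q j)) :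
    (X * Y).trace * (2 ^ n : ℂ) = X.trace * Y.trace := by
  have hdiag : ∀ x : Cfg n, (X * Y) x x = X x x * Y x x := by
    intro x
    rw [mul_apply_disjoint hX hY hd]
    have hOffxx : Off (fun j => p j ∨ q j) x x := fun j _ => rfl
    rw [if_pos hOffxx]
    congr 2 <;> · funext j; split_ifs <;> rfl
  have hcard : Fintype.card (Cfg n) = 2 ^ n := by
    simp [Fintype.card_fun]
  set F : Cfg n → ℂ := fun z => X z z * Y z z with hF
  have e1 : ∀ xy : Cfg n × Cfg n, X xy.1 xy.1 * Y xy.2 xy.2 =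
      F (fun j => if q j then xy.2 j else xy.1 j) := by
    rintro ⟨x, y⟩
    simp only [hF]
    have ex : X x x = X (fun j => if q j then y j else x j) (fun j => if q j then y j else x j) :=
      hX.2 _ _ _ _ (fun j hj => by simp only [if_neg (fun hq => hd j ⟨hj, hq⟩)])
        (fun j hj => by simp only [if_neg (fun hq => hd j ⟨hj, hq⟩)])
        (fun _ _ => rfl) (fun _ _ => rfl)
    have ey : Y y y = Y (fun j => if q j then y j else x j) (fun j => if q j then y j else x j) :=
      hY.2 _ _ _ _ (fun j hj => by simp only [if_pos hj]) (fun j hj => by simp only [if_pos hj])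
        (fun _ _ => rfl) (fun _ _ => rfl)
    rw [← ex, ← ey]
  have hinv : Function.Involutive (fun xy : Cfg n × Cfg n =>
      ((fun j => if q j then xy.2 j else xy.1 j, fun j => if q j then xy.1 j else xy.2 j)
        : Cfg n × Cfg n)) := by
    rintro ⟨x, y⟩
    simp only [Prod.mk.injEq]
    constructor <;> funext j <;> by_cases hq : q j <;> simp [hq]
  have key : X.trace * Y.trace = (2 ^ n : ℂ) * (X * Y).trace := by
    rw [Matrix.trace, Matrix.trace, Matrix.trace]
    simp only [Matrix.diag]
    have heq : ∀ x : Cfg n, (X * Y) x x = F x := fun x => hdiag x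
    calc (∑ x : Cfg n, X x x) * (∑ y : Cfg n, Y y y)
        = ∑ xy : Cfg n × Cfg n, X xy.1 xy.1 * Y xy.2 xy.2 := by
          rw [Finset.sum_mul_sum, ← Fintype.sum_prod_type']
      _ = ∑ xy : Cfg n × Cfg n, F (fun j => if q j then xy.2 j else xy.1 j) := by
          refine Fintype.sum_congr _ _ (fun xy => ?_)
          exact e1 xy
      _ = ∑ xy : Cfg n × Cfg n, F xy.1 :=
          Fintype.sum_bijective _ hinv.bijective _ _ (fun xy => rfl)
      _ = ∑ x : Cfg n, ∑ y : Cfg n, F x := by rw [Fintype.sum_prod_type]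
      _ = (2 ^ n : ℂ) * ∑ x : Cfg n, F x := by
          simp only [Finset.sum_const, Finset.card_univ, hcard, nsmul_eq_mul, Finset.mul_sum]
          push_cast
          ring
      _ = (2 ^ n : ℂ) * ∑ x : Cfg n, (X * Y) x x := by
          simp only [heq]
  rw [key]; ring
end Supp2

section OpNorm
open scoped Matrix.Norms.L2Operator
variable {d : Type*} [Fintype d] [DecidableEq d]

lemma opNorm_eq_norm (X : Matrix d d ℂ) : opNorm X = ‖X‖ := rfl

lemma opNorm_mul_le (X Y : Matrix d d ℂ) : opNorm (X * Y) ≤ opNorm X * opNorm Y := by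
  simp only [opNorm_eq_norm]
  exact Matrix.l2_opNorm_mul X Y

lemma opNorm_one_le [Nonempty d] : opNorm (1 : Matrix d d ℂ) ≤ 1 := by
  rw [opNorm_eq_norm]
  exact le_of_eq (norm_one)

lemma entry_le_opNorm (X : Matrix d d ℂ) (a b : d) : ‖X a b‖ ≤ opNorm X := by
  classical
  set L := LinearMap.toContinuousLinearMap (Matrix.toEuclideanLin X)
  have h1 : X a b = inner (𝕜 := ℂ) (EuclideanSpace.single a (1:ℂ))
      (L (EuclideanSpace.single b (1:ℂ))) := by
    rw [EuclideanSpace.inner_single_left]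
    simp only [L, _root_.map_one, one_mul, LinearMap.coe_toContinuousLinearMap']
    rw [Matrix.toEuclideanLin_apply]
    rw [PiLp.ofLp_single]
    rw [Matrix.mulVec_single_one]
    simp
  rw [h1]
  refine le_trans (norm_inner_le_norm _ _) ?_
  rw [EuclideanSpace.norm_single]
  simp only [norm_one, one_mul]
  calc ‖L (EuclideanSpace.single b 1)‖ ≤ ‖L‖ * ‖EuclideanSpace.single b (1:ℂ)‖ := L.le_opNorm _
    _ = opNorm X := by rw [EuclideanSpace.norm_single, norm_one, mul_one]; rfl

lemma abs_trace_le (X : Matrix d d ℂ) :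
    ‖X.trace‖ ≤ (Fintype.card d : ℝ) * opNorm X := by
  rw [Matrix.trace]
  calc ‖∑ i, X.diag i‖ ≤ ∑ i, ‖X.diag i‖ :=
        norm_sum_le _ _
    _ ≤ ∑ _i : d, opNorm X := Finset.sum_le_sum (fun i _ => entry_le_opNorm X i i)
    _ = (Fintype.card d : ℝ) * opNorm X := by
        rw [Finset.sum_const, Finset.card_univ, nsmul_eq_mul]

lemma opNorm_list_prod_le [Nonempty d] (l : List (Matrix d d ℂ))
    (hl : ∀ Y ∈ l, opNorm Y ≤ 1) : opNorm l.prod ≤ 1 := by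
  induction l with
  | nil => simpa using opNorm_one_le
  | cons a l ih =>
    rw [List.prod_cons]
    calc opNorm (a * l.prod) ≤ opNorm a * opNorm l.prod := opNorm_mul_le _ _
      _ ≤ 1 * 1 := by
          refine mul_le_mul (hl a (List.mem_cons_self))
            (ih (fun Y hY => hl Y (List.mem_cons_of_mem a hY)))
            (by rw [opNorm_eq_norm]; exact norm_nonneg _) zero_le_one
      _ = 1 := by ring
end OpNorm


/-- `b` is within cyclic distance `r` of `a` -/
def NearR (n r : ℕ) (a b : Fin n) : Prop :=
  ∃ c : ℤ, c.natAbs ≤ r ∧ ((b : ℕ) : ZMod n) = ((a : ℕ) : ZMod n) + c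

lemma nearR_mono {n r s : ℕ} (hrs : r ≤ s) {a b : Fin n} (h : NearR n r a b) : NearR n s a b := by
  obtain ⟨c, hc, he⟩ := h
  exact ⟨c, le_trans hc hrs, he⟩

lemma nearR_symm {n r : ℕ} {a b : Fin n} (h : NearR n r a b) : NearR n r b a := by
  obtain ⟨c, hc, he⟩ := h
  exact ⟨-c, by simpa using hc, by rw [he]; push_cast; ring⟩

lemma nearR_trans {n r s : ℕ} {a b c : Fin n} (h1 : NearR n r a b) (h2 : NearR n s b c) :
    NearR n (r + s) a c := by
  obtain ⟨c1, hc1, he1⟩ := h1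
  obtain ⟨c2, hc2, he2⟩ := h2
  refine ⟨c1 + c2, ?_, by rw [he2, he1]; push_cast; ring⟩
  calc (c1 + c2).natAbs ≤ c1.natAbs + c2.natAbs := Int.natAbs_add_le _ _
    _ ≤ r + s := Nat.add_le_add hc1 hc2

lemma cast_fin_inj {n : ℕ} (hn : 0 < n) {a b : Fin n}
    (h : ((a : ℕ) : ZMod n) = ((b : ℕ) : ZMod n)) : a = b := by
  haveI : NeZero n := ⟨hn.ne'⟩
  have := congrArg ZMod.val h
  rwa [ZMod.val_cast_of_lt a.2, ZMod.val_cast_of_lt b.2, ← Fin.ext_iff] at this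

section Count
variable (m n : ℕ)

/-- `k` has an earlier index whose value is within distance `2m` -/
def OldAt (f : Fin m → Fin n) (k : Fin m) : Prop :=
  ∃ j : Fin m, j < k ∧ NearR n (2 * m) (f j) (f k)

noncomputable def NewS (f : Fin m → Fin n) : Finset (Fin m) :=
  Finset.univ.filter (fun k => ¬ OldAt m n f k)

lemma newS_card_le (hm : 1 ≤ m) (f : Fin m → Fin n)
    (Near1 : Fin n → Fin n → Prop) (hNear1 : ∀ a b, Near1 a b → NearR n 1 a b)
    (hf : ∀ k, ∃ j, j ≠ k ∧ Near1 (f k) (f j)) : (NewS m n f).card ≤ m / 2 := by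
  choose part hpart1 hpart2 using hf
  have h2m : ∀ k, NearR n (2 * m) (f k) (f (part k)) := by
    intro k
    exact nearR_mono (by omega) (hNear1 _ _ (hpart2 k))
  have hlt : ∀ k ∈ NewS m n f, k < part k := by
    intro k hk
    simp only [NewS, Finset.mem_filter] at hk
    rcases lt_trichotomy (part k) k with h | h | h
    · exact absurd ⟨part k, h, nearR_symm (h2m k)⟩ hk.2
    · exact absurd h (hpart1 k)
    · exact h
  have hmap : ∀ k ∈ NewS m n f, part k ∈ Finset.univ \ NewS m n f := by
    intro k hk
    simp only [Finset.mem_sdiff, Finset.mem_univ, true_and, NewS, Finset.mem_filter, not_and,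
      not_not]
    exact ⟨k, hlt k hk, h2m k⟩
  have hinj : Set.InjOn part (NewS m n f) := by
    intro k hk k' hk' he
    by_contra hne
    have key : ∀ a b : Fin m, a ∈ NewS m n f → b ∈ NewS m n f → part a = part b → a < b → False := by
      intro a b ha hb hab hlt'
      have h2 : NearR n (2 * m) (f a) (f b) := by
        have t1 : NearR n 1 (f a) (f (part a)) := hNear1 _ _ (hpart2 a)
        have t2 : NearR n 1 (f (part b)) (f b) := nearR_symm (hNear1 _ _ (hpart2 b))
        rw [hab] at t1
        exact nearR_mono (by omega) (nearR_trans t1 t2)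
      simp only [NewS, Finset.mem_filter] at hb
      exact hb.2 ⟨a, hlt', h2⟩
    rcases lt_trichotomy k k' with h | h | h
    · exact key k k' hk hk' he h
    · exact hne h
    · exact key k' k hk' hk he.symm h
  have hcard : (NewS m n f).card ≤ (Finset.univ \ NewS m n f).card :=
    Finset.card_le_card_of_injOn part hmap hinj
  have hsd : (Finset.univ \ NewS m n f).card = m - (NewS m n f).card := by
    rw [Finset.card_sdiff_of_subset (Finset.subset_univ _), Finset.card_univ, Fintype.card_fin]
  have hle : (NewS m n f).card ≤ m := by
    calc (NewS m n f).card ≤ (Finset.univ : Finset (Fin m)).card := Finset.card_le_card (Finset.subset_univ _)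
      _ = m := by rw [Finset.card_univ, Fintype.card_fin]
  omega

lemma count_S (hn : 0 < n) (S : Finset (Fin m)) :
    ((Finset.univ : Finset (Fin m → Fin n)).filter
      (fun f => ∀ k, k ∉ S → OldAt m n f k)).card
      ≤ n ^ S.card * (m * (4 * m + 1)) ^ m := by
  classical
  set T := ((Finset.univ : Finset (Fin m → Fin n)).filter
      (fun f => ∀ k, k ∉ S → OldAt m n f k)) with hT
  -- encoding map
  have hcode : ∀ (f : Fin m → Fin n) (k : Fin m), OldAt m n f k →
      ∃ jc : Fin m × ℤ, jc.1 < k ∧ jc.2.natAbs ≤ 2 * m ∧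
        ((f k : ℕ) : ZMod n) = ((f jc.1 : ℕ) : ZMod n) + jc.2 := by
    intro f k hk
    obtain ⟨j, hj, c, hc, he⟩ := hk
    exact ⟨(j, c), hj, hc, he⟩
  set enc : (Fin m → Fin n) → ({x // x ∈ S} → Fin n) × (Fin m → Fin m × Fin (4 * m + 1)) :=
    fun f => (fun k => f k.1, fun k =>
      if hk : OldAt m n f k then
        ((hcode f k hk).choose.1,
          ⟨((hcode f k hk).choose.2 + 2 * m).toNat, by
            have h1 := (hcode f k hk).choose_spec.2.1
            omega⟩)
      else (k, ⟨0, by omega⟩)) with henc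
  have hinj : Set.InjOn enc T := by
    intro f hf g hg he
    simp only [hT, Finset.mem_coe, Finset.mem_filter] at hf hg
    have main : ∀ N : ℕ, ∀ k : Fin m, (k : ℕ) < N → f k = g k := by
      intro N
      induction N with
      | zero => exact fun k hk => absurd hk (Nat.not_lt_zero _)
      | succ N ih =>
        intro k hkN
        by_cases hkS : k ∈ S
        · exact congrFun (congrArg Prod.fst he) ⟨k, hkS⟩
        · have hof : OldAt m n f k := hf.2 k hkS
          have hog : OldAt m n g k := hg.2 k hkS
          have he2 := congrFun (congrArg Prod.snd he) k
          simp only [henc] at he2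
          rw [dif_pos hof, dif_pos hog] at he2
          obtain ⟨hj1, hc1, he1⟩ := (hcode f k hof).choose_spec
          obtain ⟨hj2, hc2, he2'⟩ := (hcode g k hog).choose_spec
          rw [Prod.mk.injEq] at he2
          obtain ⟨hjeq, hrest⟩ := he2
          have hfin := congrArg Fin.val hrest
          have hceq : (hcode f k hof).choose.2 = (hcode g k hog).choose.2 := by
            have hfin' : ((hcode f k hof).choose.2 + 2 * (m : ℤ)).toNat
                = ((hcode g k hog).choose.2 + 2 * (m : ℤ)).toNat := hfin
            omega
          have hnat : ((hcode f k hof).choose.1 : ℕ) < (k : ℕ) := hj1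
          have hfg : f (hcode f k hof).choose.1 = g (hcode g k hog).choose.1 := by
            rw [← hjeq]
            exact ih _ (by omega)
          refine cast_fin_inj hn ?_
          rw [he1, he2', hceq, hfg]
    funext k
    exact main m k k.2
  have hc1 : T.card ≤ Fintype.card (({x // x ∈ S} → Fin n) × (Fin m → Fin m × Fin (4 * m + 1))) := by
    have h2 := Finset.card_le_card_of_injOn enc (fun f _ => Finset.mem_univ _) hinj
    simpa [Finset.card_univ] using h2
  refine hc1.trans (le_of_eq ?_)
  rw [Fintype.card_prod, Fintype.card_fun, Fintype.card_fun]
  simp [Fintype.card_coe, Fintype.card_prod, mul_comm]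

lemma count_bad (hm : 1 ≤ m) (hn : 0 < n)
    (Near1 : Fin n → Fin n → Prop) (hNear1 : ∀ a b, Near1 a b → NearR n 1 a b) :
    ((Finset.univ : Finset (Fin m → Fin n)).filter
      (fun f => ∀ k, ∃ j, j ≠ k ∧ Near1 (f k) (f j))).card
      ≤ 2 ^ m * (m * (4 * m + 1)) ^ m * n ^ (m / 2) := by
  classical
  set Bad := ((Finset.univ : Finset (Fin m → Fin n)).filter
      (fun f => ∀ k, ∃ j, j ≠ k ∧ Near1 (f k) (f j))) with hBad
  set T := ((Finset.univ : Finset (Finset (Fin m))).filter (fun S => S.card ≤ m / 2)) with hT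
  have hsub : Bad ⊆ T.biUnion (fun S =>
      (Finset.univ : Finset (Fin m → Fin n)).filter (fun f => ∀ k, k ∉ S → OldAt m n f k)) := by
    intro f hf
    simp only [hBad, Finset.mem_filter, Finset.mem_univ, true_and] at hf
    refine Finset.mem_biUnion.2 ⟨NewS m n f, ?_, ?_⟩
    · simp only [hT, Finset.mem_filter, Finset.mem_univ, true_and]
      exact newS_card_le m n hm f Near1 hNear1 hf
    · simp only [Finset.mem_filter, Finset.mem_univ, true_and]
      intro k hk
      simp only [NewS, Finset.mem_filter, Finset.mem_univ, true_and, not_not] at hk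
      exact hk
  calc Bad.card ≤ (T.biUnion (fun S =>
      (Finset.univ : Finset (Fin m → Fin n)).filter (fun f => ∀ k, k ∉ S → OldAt m n f k))).card :=
        Finset.card_le_card hsub
    _ ≤ ∑ S ∈ T, ((Finset.univ : Finset (Fin m → Fin n)).filter
        (fun f => ∀ k, k ∉ S → OldAt m n f k)).card := Finset.card_biUnion_le
    _ ≤ ∑ S ∈ T, (m * (4 * m + 1)) ^ m * n ^ (m / 2) := by
        refine Finset.sum_le_sum (fun S hS => ?_)
        simp only [hT, Finset.mem_filter] at hS
        calc ((Finset.univ : Finset (Fin m → Fin n)).filter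
            (fun f => ∀ k, k ∉ S → OldAt m n f k)).card
            ≤ n ^ S.card * (m * (4 * m + 1)) ^ m := count_S m n hn S
          _ ≤ n ^ (m / 2) * (m * (4 * m + 1)) ^ m :=
              Nat.mul_le_mul_right _ (Nat.pow_le_pow_right hn hS.2)
          _ = (m * (4 * m + 1)) ^ m * n ^ (m / 2) := Nat.mul_comm _ _
    _ = T.card * ((m * (4 * m + 1)) ^ m * n ^ (m / 2)) := by
        rw [Finset.sum_const, smul_eq_mul]
    _ ≤ 2 ^ m * ((m * (4 * m + 1)) ^ m * n ^ (m / 2)) := by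
        refine Nat.mul_le_mul_right _ ?_
        calc T.card ≤ (Finset.univ : Finset (Finset (Fin m))).card :=
              Finset.card_le_card (Finset.filter_subset _ _)
          _ = 2 ^ m := by rw [Finset.card_univ, Fintype.card_finset, Fintype.card_fin]
    _ = 2 ^ m * (m * (4 * m + 1)) ^ m * n ^ (m / 2) := by ring
end Count


lemma pow_eq_sum_prod {R ι : Type*} [Ring R] [Fintype ι] (A : ι → R) (m : ℕ) :
    (∑ i, A i) ^ m = ∑ f : Fin m → ι, (List.ofFn fun k => A (f k)).prod := by
  induction m with
  | zero =>
    simp [Finset.card_univ]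
  | succ m ih =>
    calc (∑ i, A i) ^ (m + 1) = (∑ i, A i) * (∑ i, A i) ^ m := pow_succ' _ _
      _ = ∑ i, ∑ g : Fin m → ι, A i * (List.ofFn fun k => A (g k)).prod := by
          rw [ih, Finset.sum_mul_sum]
      _ = ∑ p : ι × (Fin m → ι), A p.1 * (List.ofFn fun k => A (p.2 k)).prod := by
          rw [Fintype.sum_prod_type]
      _ = ∑ f : Fin (m + 1) → ι, (List.ofFn fun k => A (f k)).prod := by
          refine Fintype.sum_equiv (Fin.consEquiv fun _ => ι) _ _ (fun f => ?_)
          rw [List.ofFn_succ, List.prod_cons]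
          rfl


section Main
variable {n : ℕ}

/-- the two sites on which `twoSite n a _` acts -/
def Pst (a : Fin n) : Fin n → Prop := fun s => s = a ∨ s = nxt a

/-- supports of `a` and `b` overlap -/
def Near1 (a b : Fin n) : Prop := ∃ s, Pst a s ∧ Pst b s

lemma cast_nxt (hn : 3 ≤ n) (a : Fin n) :
    ((nxt a : ℕ) : ZMod n) = ((a : ℕ) : ZMod n) + 1 := by
  show (((a.1 + 1) % n : ℕ) : ZMod n) = _
  rw [ZMod.natCast_mod]
  push_cast
  ring

lemma near1_to_nearR (hn : 3 ≤ n) (a b : Fin n) (h : Near1 a b) : NearR n 1 a b := by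
  obtain ⟨s, hsa, hsb⟩ := h
  rcases hsa with rfl | rfl <;> rcases hsb with hb | hb
  · exact ⟨0, by norm_num, by rw [← hb]; push_cast; ring⟩
  · refine ⟨-1, by norm_num, ?_⟩
    have hcb := cast_nxt hn b
    rw [← hb] at hcb
    rw [hcb]
    push_cast
    ring
  · refine ⟨1, by norm_num, ?_⟩
    rw [← hb, cast_nxt hn a]
    push_cast
    ring
  · refine ⟨0, by norm_num, ?_⟩
    have h1 := cast_nxt hn a
    have h2 := cast_nxt hn b
    rw [hb, h2] at h1
    have h3 := add_right_cancel h1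
    rw [h3]
    push_cast
    ring
end Main

section Iso
variable {n : ℕ}

lemma trace_isolated (A : Fin n → Matrix (Cfg n) (Cfg n) ℂ)
    (hSupp : ∀ i, SuppOn (Pst i) (A i))
    {m : ℕ} (f : Fin m → Fin n) (k : Fin m)
    (hdisj : ∀ j : Fin m, j ≠ k → ∀ s, ¬ (Pst (f k) s ∧ Pst (f j) s))
    (htr : (A (f k)).trace = 0) :
    (List.ofFn fun j => A (f j)).prod.trace = 0 := by
  classical
  set l := (List.ofFn fun j => A (f j)) with hl
  have hlen : l.length = m := List.length_ofFn
  have hkl : (k : ℕ) < l.length := by rw [hlen]; exact k.2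
  set q : Fin n → Prop := fun s => ¬ Pst (f k) s with hq
  have hgl : ∀ (i : ℕ) (hi : i < l.length), l[i] = A (f ⟨i, by omega⟩) := by
    intro i hi
    simp only [hl, List.getElem_ofFn]
  have hmem : ∀ Y, (Y ∈ l.take (k : ℕ) ∨ Y ∈ l.drop ((k : ℕ) + 1)) → SuppOn q Y := by
    intro Y hY
    have hex : ∃ j : Fin m, j ≠ k ∧ Y = A (f j) := by
      rcases hY with hY | hY
      · rw [List.mem_iff_getElem] at hY
        obtain ⟨i, hi, hYe⟩ := hY
        have hik : i < (k : ℕ) := by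
          rw [List.length_take, hlen] at hi
          omega
        have him : i < m := by omega
        rw [List.getElem_take] at hYe
        refine ⟨⟨i, him⟩, ?_, ?_⟩
        · intro hc
          have := congrArg Fin.val hc
          simp only [Fin.val_mk] at this
          omega
        · rw [← hYe, hgl i (by omega)]
      · rw [List.mem_iff_getElem] at hY
        obtain ⟨i, hi, hYe⟩ := hY
        have hlim : (k : ℕ) + 1 + i < m := by
          rw [List.length_drop, hlen] at hi
          omega
        rw [List.getElem_drop] at hYe
        refine ⟨⟨(k : ℕ) + 1 + i, hlim⟩, ?_, ?_⟩
        · intro hc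
          have := congrArg Fin.val hc
          simp only [Fin.val_mk] at this
          omega
        · rw [← hYe, hgl _ (by omega)]
    obtain ⟨j, hj, rfl⟩ := hex
    exact suppOn_mono (fun s hs hPk => hdisj j hj s ⟨hPk, hs⟩) (hSupp (f j))
  have hT : SuppOn q (l.take (k : ℕ)).prod :=
    suppOn_list_prod _ (fun Y hY => hmem Y (Or.inl hY))
  have hD : SuppOn q (l.drop ((k : ℕ) + 1)).prod :=
    suppOn_list_prod _ (fun Y hY => hmem Y (Or.inr hY))
  have hXl : l[(k : ℕ)] = A (f k) := by
    rw [hgl _ hkl]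
  have hsplit : l.prod = (l.take (k : ℕ)).prod * (A (f k) * (l.drop ((k : ℕ) + 1)).prod) := by
    conv_lhs => rw [← List.take_append_drop (k : ℕ) l]
    rw [List.prod_append, List.drop_eq_getElem_cons hkl, List.prod_cons, hXl]
  have hcomm : A (f k) * (l.take (k : ℕ)).prod = (l.take (k : ℕ)).prod * A (f k) :=
    commute_of_disjoint (hSupp (f k)) hT (fun s hc => hc.2 hc.1)
  have hre : l.prod = A (f k) * ((l.take (k : ℕ)).prod * (l.drop ((k : ℕ) + 1)).prod) := by
    rw [hsplit, ← mul_assoc, ← hcomm, mul_assoc]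
  have h0 := trace_mul_disjoint (hSupp (f k)) (suppOn_mul hT hD) (fun s hc => hc.2 hc.1)
  rw [htr, zero_mul] at h0
  have h2n : (2 ^ n : ℂ) ≠ 0 := pow_ne_zero _ two_ne_zero
  have := mul_eq_zero.1 h0
  rcases this with h | h
  · rw [hre]
    exact h
  · exact absurd h h2n
end Iso

theorem stmt6 (m : ℕ) (hm : 0 < m) :
    ∃ C : ℝ, 0 < C ∧ ∀ n : ℕ, 3 ≤ n →
      ∀ h : Fin n → Matrix (Fin 2 × Fin 2) (Fin 2 × Fin 2) ℂ,
        (∀ i, (twoSite n i (h i)).IsHermitian) →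
        (∀ i, (twoSite n i (h i)).trace = 0) →
        (∀ i, opNorm (twoSite n i (h i)) ≤ 1) →
        ‖((∑ i : Fin n, twoSite n i (h i)) ^ m).trace‖ / 2 ^ n ≤
          C * (n : ℝ) ^ (m / 2) := by
  classical
  set K : ℕ := 2 ^ m * (m * (4 * m + 1)) ^ m with hK
  have hKpos : 0 < K :=
    Nat.mul_pos (pow_pos (by norm_num) m) (pow_pos (Nat.mul_pos hm (by omega)) m)
  refine ⟨(K : ℝ), by exact_mod_cast hKpos, ?_⟩
  intro n hn h hherm htr hnorm
  set A : Fin n → Matrix (Cfg n) (Cfg n) ℂ := fun i => twoSite n i (h i) with hA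
  have hSupp : ∀ i, SuppOn (Pst i) (A i) := fun i => suppOn_twoSite i (h i)
  set Bad : Finset (Fin m → Fin n) := (Finset.univ.filter
    (fun f => ∀ k, ∃ j, j ≠ k ∧ Near1 (f k) (f j))) with hBad
  have hcardBad : Bad.card ≤ K * n ^ (m / 2) := by
    have := count_bad m n hm (by omega) Near1 (near1_to_nearR hn)
    calc Bad.card ≤ 2 ^ m * (m * (4 * m + 1)) ^ m * n ^ (m / 2) := this
      _ = K * n ^ (m / 2) := by rw [hK]
  have hcard2 : Fintype.card (Cfg n) = 2 ^ n := by simp [Fintype.card_fun]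
  haveI : Nonempty (Cfg n) := ⟨fun _ => 0⟩
  set L : (Fin m → Fin n) → Matrix (Cfg n) (Cfg n) ℂ :=
    fun f => (List.ofFn fun k => A (f k)).prod with hL
  have hexpand : ((∑ i, A i) ^ m).trace = ∑ f : Fin m → Fin n, (L f).trace := by
    rw [pow_eq_sum_prod, Matrix.trace_sum]
  have hvanish : ∀ f ∉ Bad, (L f).trace = 0 := by
    intro f hf
    simp only [hBad, Finset.mem_filter, Finset.mem_univ, true_and, not_forall] at hf
    obtain ⟨k, hk⟩ := hf
    refine trace_isolated A hSupp f k ?_ (htr (f k))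
    intro j hj s hs
    exact hk ⟨j, hj, s, hs⟩
  have hterm : ∀ f : Fin m → Fin n, ‖(L f).trace‖ ≤ (2 ^ n : ℝ) := by
    intro f
    have h1 : opNorm (L f) ≤ 1 := by
      refine opNorm_list_prod_le _ (fun Y hY => ?_)
      rw [List.mem_ofFn] at hY
      obtain ⟨j, rfl⟩ := hY
      exact hnorm (f j)
    calc ‖(L f).trace‖ ≤ (Fintype.card (Cfg n) : ℝ) * opNorm (L f) :=
          abs_trace_le _
      _ ≤ (2 ^ n : ℝ) * 1 := by
          rw [hcard2]
          push_cast
          exact mul_le_mul_of_nonneg_left h1 (by positivity)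
      _ = (2 ^ n : ℝ) := mul_one _
  have habs : ‖((∑ i, A i) ^ m).trace‖ ≤ (Bad.card : ℝ) * 2 ^ n := by
    rw [hexpand, ← Finset.sum_subset (Finset.subset_univ Bad) (fun f _ hf => hvanish f hf)]
    calc ‖∑ f ∈ Bad, (L f).trace‖ ≤ ∑ f ∈ Bad, ‖(L f).trace‖ :=
          norm_sum_le _ _
      _ ≤ ∑ _f ∈ Bad, (2 ^ n : ℝ) := Finset.sum_le_sum (fun f _ => hterm f)
      _ = (Bad.card : ℝ) * 2 ^ n := by rw [Finset.sum_const, nsmul_eq_mul]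
  rw [div_le_iff₀ (by positivity : (0:ℝ) < 2 ^ n)]
  calc ‖((∑ i, A i) ^ m).trace‖ ≤ (Bad.card : ℝ) * 2 ^ n := habs
    _ ≤ ((K * n ^ (m / 2) : ℕ) : ℝ) * 2 ^ n := by
        refine mul_le_mul_of_nonneg_right ?_ (by positivity)
        exact_mod_cast hcardBad
    _ = (K : ℝ) * (n : ℝ) ^ (m / 2) * 2 ^ n := by push_cast; ring
end

section
/- Let H be a Hermitian d×d complex matrix with orthonormal eigenbasis |1⟩,…,|d⟩ and eigenvalues E_1,…,E_d, let Δ > 0, and for each j let Q_j := Σ_{k : |E_k − E_j| ≥ Δ} |k⟩⟨k|. Then for all d×d complex matrices A, B, C, D: | (1/d) Σ_j Σ_{k : |E_k − E_j| ≥ Δ} A_{jj} B_{jk} C_{kk} D_{kj} | ≤ (‖C‖/d) Σ_j |A_{jj}| · ‖Q_j B† |j⟩‖ · ‖Q_j D |j⟩‖, where ‖·‖ is the operator norm on matrices and the Euclidean norm on vectors. -/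
open Matrix Finset
open scoped Classical

/-- the Euclidean norm of a vector -/
noncomputable def evNorm {d : Type*} [Fintype d] (v : d → ℂ) : ℝ :=
  Real.sqrt (∑ i, norm (v i) ^ 2)

variable {d : ℕ}

lemma evNorm_eq (v : Fin d → ℂ) : evNorm v = ‖(WithLp.equiv 2 (Fin d → ℂ)).symm v‖ := by
  simp [evNorm, EuclideanSpace.norm_eq]

lemma evNorm_mulVec_le (X : Matrix (Fin d) (Fin d) ℂ) (v : Fin d → ℂ) :
    evNorm (X.mulVec v) ≤ opNorm X * evNorm v := by
  rw [evNorm_eq, evNorm_eq, opNorm]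
  have h := (LinearMap.toContinuousLinearMap (Matrix.toEuclideanLin X)).le_opNorm
    ((WithLp.equiv 2 (Fin d → ℂ)).symm v)
  rw [LinearMap.coe_toContinuousLinearMap'] at h; exact h

lemma sq_sum_eq (v : Fin d → ℂ) : (∑ i, norm (v i) ^ 2 : ℝ) = (star v ⬝ᵥ v).re := by
  rw [dotProduct, Complex.re_sum]
  refine Finset.sum_congr rfl fun i _ => ?_
  simp [Pi.star_apply, Complex.star_def, ← Complex.normSq_eq_norm_sq, Complex.normSq_eq_conj_mul_self, Complex.normSq_apply]

lemma evNorm_unitary_mulVec (U : Matrix (Fin d) (Fin d) ℂ) (hU : U ∈ Matrix.unitaryGroup (Fin d) ℂ)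
    (v : Fin d → ℂ) : evNorm (U.mulVec v) = evNorm v := by
  unfold evNorm
  congr 1
  rw [sq_sum_eq, sq_sum_eq]
  congr 1
  rw [star_mulVec, dotProduct_mulVec, vecMul_vecMul]
  have h1 : star v ᵥ* (Uᴴ * U) = star v ᵥ* 1 := by
    rw [show Uᴴ * U = 1 from hU.1]
  rw [h1, vecMul_one]

lemma abs_dotProduct_le (u w : Fin d → ℂ) :
    norm (star u ⬝ᵥ w) ≤ evNorm u * evNorm w := by
  unfold evNorm
  calc norm (star u ⬝ᵥ w) ≤ ∑ i, norm (star (u i) * w i) :=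
        norm_sum_le _ _
    _ = ∑ i, norm (u i) * norm (w i) := by
        refine Finset.sum_congr rfl fun i _ => ?_
        rw [norm_mul]; simp [Complex.norm_conj]
    _ ≤ _ := Real.sum_mul_le_sqrt_mul_sqrt _ _ _

lemma evNorm_col (U : Matrix (Fin d) (Fin d) ℂ) (hU : U ∈ Matrix.unitaryGroup (Fin d) ℂ)
    (j : Fin d) : evNorm (fun r => U r j) = 1 := by
  unfold evNorm
  rw [sq_sum_eq]
  have h : star (fun r => U r j) ⬝ᵥ (fun r => U r j) = (Uᴴ * U) j j := by
    simp [Matrix.mul_apply, dotProduct, conjTranspose_apply]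
  rw [h, show Uᴴ * U = 1 from hU.1]
  simp

lemma diag_entry_bound (U : Matrix (Fin d) (Fin d) ℂ) (hU : U ∈ Matrix.unitaryGroup (Fin d) ℂ)
    (C : Matrix (Fin d) (Fin d) ℂ) (k : Fin d) :
    norm ((Uᴴ * C * U) k k) ≤ opNorm C := by
  have h : (Uᴴ * C * U) k k = star (fun r => U r k) ⬝ᵥ C.mulVec (fun r => U r k) := by
    simp only [Matrix.mul_apply, conjTranspose_apply, dotProduct, mulVec, Pi.star_apply,
      Finset.sum_mul, Finset.mul_sum]
    rw [Finset.sum_comm]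
    refine Finset.sum_congr rfl fun a _ => Finset.sum_congr rfl fun b _ => by ring
  have hc := evNorm_col U hU k
  have hb : evNorm (C.mulVec fun r => U r k) ≤ opNorm C := by
    have := evNorm_mulVec_le C (fun r => U r k)
    rwa [hc, mul_one] at this
  rw [h]
  calc norm _ ≤ evNorm (fun r => U r k) * evNorm (C.mulVec fun r => U r k) :=
        abs_dotProduct_le _ _
    _ = evNorm (C.mulVec fun r => U r k) := by rw [hc, one_mul]
    _ ≤ opNorm C := hb

lemma Qvec (U : Matrix (Fin d) (Fin d) ℂ) (g : Fin d → ℂ) (M : Matrix (Fin d) (Fin d) ℂ)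
    (j : Fin d) :
    (U * diagonal g * Uᴴ).mulVec (M.mulVec (fun r => U r j)) =
      U.mulVec (fun k => g k * (Uᴴ * M * U) k j) := by
  have hcol : (fun r => U r j) = U.mulVec (Pi.single j 1) := by
    funext r; simp [mulVec_single]
  rw [hcol, mulVec_mulVec, mulVec_mulVec]
  have hm : U * diagonal g * Uᴴ * M * U = U * (diagonal g * (Uᴴ * M * U)) := by
    simp [Matrix.mul_assoc]
  rw [hm, ← mulVec_mulVec]
  congr 1
  rw [mulVec_single]
  funext k
  simp [Matrix.diagonal_mul]

lemma evNorm_mask (P : Fin d → Prop) [DecidablePred P] (x : Fin d → ℂ) :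
    evNorm (fun k => (if P k then (1 : ℂ) else 0) * x k) =
      Real.sqrt (∑ k ∈ Finset.univ.filter P, norm (x k) ^ 2) := by
  unfold evNorm
  congr 1
  rw [Finset.sum_filter]
  refine Finset.sum_congr rfl fun k _ => ?_
  by_cases h : P k <;> simp [h]

theorem stmt11 (d : ℕ) (H : Matrix (Fin d) (Fin d) ℂ)
    (U : Matrix (Fin d) (Fin d) ℂ) (hU : U ∈ Matrix.unitaryGroup (Fin d) ℂ)
    (E : Fin d → ℝ) (hH : H = U * Matrix.diagonal (fun j => (E j : ℂ)) * Uᴴ)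
    (Δ : ℝ) (hΔ : 0 < Δ)
    (A B C D : Matrix (Fin d) (Fin d) ℂ) :
    norm ((1 / d : ℂ) * ∑ j : Fin d,
        ∑ k ∈ Finset.univ.filter fun k : Fin d => Δ ≤ |E k - E j|,
          (Uᴴ * A * U) j j * (Uᴴ * B * U) j k * (Uᴴ * C * U) k k * (Uᴴ * D * U) k j) ≤
      (opNorm C / d) * ∑ j : Fin d,
        norm ((Uᴴ * A * U) j j) *
          evNorm ((U * Matrix.diagonal (fun k => if Δ ≤ |E k - E j| then (1 : ℂ) else 0) * Uᴴ).mulVec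
            (Bᴴ.mulVec fun r => U r j)) *
          evNorm ((U * Matrix.diagonal (fun k => if Δ ≤ |E k - E j| then (1 : ℂ) else 0) * Uᴴ).mulVec
            (D.mulVec fun r => U r j)) := by
  have hB : ∀ j : Fin d,
      evNorm ((U * Matrix.diagonal (fun k => if Δ ≤ |E k - E j| then (1 : ℂ) else 0) * Uᴴ).mulVec
        (Bᴴ.mulVec fun r => U r j)) =
      Real.sqrt (∑ k ∈ Finset.univ.filter fun k : Fin d => Δ ≤ |E k - E j|,
        norm ((Uᴴ * B * U) j k) ^ 2) := by
    intro j
    rw [Qvec, evNorm_unitary_mulVec U hU, evNorm_mask]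
    congr 1
    refine Finset.sum_congr rfl fun k _ => ?_
    have h1 : Uᴴ * Bᴴ * U = (Uᴴ * B * U)ᴴ := by
      simp [conjTranspose_mul, Matrix.mul_assoc]
    rw [h1, conjTranspose_apply]
    simp [Complex.norm_conj]
  have hD : ∀ j : Fin d,
      evNorm ((U * Matrix.diagonal (fun k => if Δ ≤ |E k - E j| then (1 : ℂ) else 0) * Uᴴ).mulVec
        (D.mulVec fun r => U r j)) =
      Real.sqrt (∑ k ∈ Finset.univ.filter fun k : Fin d => Δ ≤ |E k - E j|,
        norm ((Uᴴ * D * U) k j) ^ 2) := by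
    intro j
    rw [Qvec, evNorm_unitary_mulVec U hU, evNorm_mask]
  simp only [hB, hD]
  set S : Fin d → Finset (Fin d) := fun j => Finset.univ.filter fun k : Fin d => Δ ≤ |E k - E j|
    with hS
  have hCnn : (0 : ℝ) ≤ opNorm C := norm_nonneg _
  have hdnn : (0 : ℝ) ≤ 1 / (d : ℝ) := by positivity
  have key : ∀ j : Fin d,
      norm (∑ k ∈ S j,
          (Uᴴ * A * U) j j * (Uᴴ * B * U) j k * (Uᴴ * C * U) k k * (Uᴴ * D * U) k j) ≤
        norm ((Uᴴ * A * U) j j) *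
          (opNorm C * (Real.sqrt (∑ k ∈ S j, norm ((Uᴴ * B * U) j k) ^ 2) *
            Real.sqrt (∑ k ∈ S j, norm ((Uᴴ * D * U) k j) ^ 2))) := by
    intro j
    have hfac : (∑ k ∈ S j,
        (Uᴴ * A * U) j j * (Uᴴ * B * U) j k * (Uᴴ * C * U) k k * (Uᴴ * D * U) k j) =
        (Uᴴ * A * U) j j * ∑ k ∈ S j,
          (Uᴴ * B * U) j k * (Uᴴ * C * U) k k * (Uᴴ * D * U) k j := by
      rw [Finset.mul_sum]
      exact Finset.sum_congr rfl fun k _ => by ring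
    rw [hfac, norm_mul]
    refine mul_le_mul_of_nonneg_left ?_ (norm_nonneg _)
    calc norm (∑ k ∈ S j,
            (Uᴴ * B * U) j k * (Uᴴ * C * U) k k * (Uᴴ * D * U) k j)
        ≤ ∑ k ∈ S j, norm ((Uᴴ * B * U) j k * (Uᴴ * C * U) k k * (Uᴴ * D * U) k j) :=
          norm_sum_le _ _
      _ ≤ ∑ k ∈ S j, opNorm C *
            (norm ((Uᴴ * B * U) j k) * norm ((Uᴴ * D * U) k j)) := by
          refine Finset.sum_le_sum fun k _ => ?_
          rw [norm_mul, norm_mul]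
          have h2 := diag_entry_bound U hU C k
          calc norm ((Uᴴ * B * U) j k) * norm ((Uᴴ * C * U) k k) *
                norm ((Uᴴ * D * U) k j)
              ≤ norm ((Uᴴ * B * U) j k) * opNorm C * norm ((Uᴴ * D * U) k j) := by
                have := mul_le_mul_of_nonneg_left h2 (norm_nonneg ((Uᴴ * B * U) j k))
                exact mul_le_mul_of_nonneg_right this (norm_nonneg _)
            _ = opNorm C * (norm ((Uᴴ * B * U) j k) * norm ((Uᴴ * D * U) k j)) := by
                ring
      _ = opNorm C * ∑ k ∈ S j,
            norm ((Uᴴ * B * U) j k) * norm ((Uᴴ * D * U) k j) := by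
          rw [Finset.mul_sum]
      _ ≤ opNorm C * (Real.sqrt (∑ k ∈ S j, norm ((Uᴴ * B * U) j k) ^ 2) *
            Real.sqrt (∑ k ∈ S j, norm ((Uᴴ * D * U) k j) ^ 2)) :=
          mul_le_mul_of_nonneg_left (Real.sum_mul_le_sqrt_mul_sqrt _ _ _) hCnn
  calc norm ((1 / d : ℂ) * ∑ j : Fin d, ∑ k ∈ S j,
          (Uᴴ * A * U) j j * (Uᴴ * B * U) j k * (Uᴴ * C * U) k k * (Uᴴ * D * U) k j)
      = (1 / (d : ℝ)) * norm (∑ j : Fin d, ∑ k ∈ S j,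
          (Uᴴ * A * U) j j * (Uᴴ * B * U) j k * (Uᴴ * C * U) k k * (Uᴴ * D * U) k j) := by
        rw [norm_mul]
        congr 1
        rw [norm_div]
        simp [Complex.norm_natCast]
    _ ≤ (1 / (d : ℝ)) * ∑ j : Fin d, norm (∑ k ∈ S j,
          (Uᴴ * A * U) j j * (Uᴴ * B * U) j k * (Uᴴ * C * U) k k * (Uᴴ * D * U) k j) :=
        mul_le_mul_of_nonneg_left (norm_sum_le _ _) hdnn
    _ ≤ (1 / (d : ℝ)) * ∑ j : Fin d, norm ((Uᴴ * A * U) j j) *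
          (opNorm C * (Real.sqrt (∑ k ∈ S j, norm ((Uᴴ * B * U) j k) ^ 2) *
            Real.sqrt (∑ k ∈ S j, norm ((Uᴴ * D * U) k j) ^ 2))) :=
        mul_le_mul_of_nonneg_left (Finset.sum_le_sum fun j _ => key j) hdnn
    _ = (opNorm C / d) * ∑ j : Fin d, norm ((Uᴴ * A * U) j j) *
          Real.sqrt (∑ k ∈ S j, norm ((Uᴴ * B * U) j k) ^ 2) *
          Real.sqrt (∑ k ∈ S j, norm ((Uᴴ * D * U) k j) ^ 2) := by
        rw [Finset.mul_sum, Finset.mul_sum]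
        exact Finset.sum_congr rfl fun j _ => by ring
end

section
/- Let H be a Hermitian d×d complex matrix with orthonormal eigenbasis |1⟩,…,|d⟩ and eigenvalues E_1,…,E_d, and let Δ > 0. Then for all d×d complex matrices A, B, C, D: | (1/d) Σ_j Σ_{k : |E_k − E_j| < Δ} A_{jj} B_{jk} (C_{jj} − C_{kk}) D_{kj} | ≤ (‖B‖ ‖D‖ / d) Σ_j |A_{jj}| · max_{k : |E_k − E_j| < Δ} |C_{jj} − C_{kk}|, where ‖·‖ denotes the operator norm. -/
open Matrix Finset
open scoped Classical

open scoped Matrix.Norms.L2Operator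

lemma opNorm_eq_l2 {d : Type*} [Fintype d] [DecidableEq d] (X : Matrix d d ℂ) :
    opNorm X = ‖X‖ := rfl

lemma col_sq_le {d : ℕ} (Y : Matrix (Fin d) (Fin d) ℂ) (j : Fin d) :
    ∑ k, ‖Y k j‖ ^ 2 ≤ ‖Y‖ ^ 2 := by
  have h := Y.l2_opNorm_mulVec (EuclideanSpace.single j (1 : ℂ))
  rw [EuclideanSpace.norm_single, norm_one, mul_one] at h
  have h2 := pow_le_pow_left₀ (norm_nonneg _) h 2
  refine le_trans (le_of_eq ?_) h2
  rw [EuclideanSpace.norm_eq, Real.sq_sqrt (by positivity)]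
  refine Finset.sum_congr rfl fun k _ => ?_
  congr 1
  show ‖Y k j‖ = ‖(Y *ᵥ (EuclideanSpace.single j (1 : ℂ))) k‖
  simp [Matrix.mulVec, dotProduct, EuclideanSpace.single_apply, mul_ite, mul_one, mul_zero]

lemma row_sq_le {d : ℕ} (X : Matrix (Fin d) (Fin d) ℂ) (j : Fin d) :
    ∑ k, ‖X j k‖ ^ 2 ≤ ‖X‖ ^ 2 := by
  have h := col_sq_le Xᴴ j
  rw [Matrix.l2_opNorm_conjTranspose] at h
  simpa [Matrix.conjTranspose_apply, Complex.norm_conj] using h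

lemma cs_bound {d : ℕ} (X Y : Matrix (Fin d) (Fin d) ℂ) (j : Fin d) :
    ∑ k, ‖X j k‖ * ‖Y k j‖ ≤ ‖X‖ * ‖Y‖ := by
  have h := Finset.sum_mul_sq_le_sq_mul_sq Finset.univ
    (fun k => ‖X j k‖) (fun k => ‖Y k j‖)
  have h1 := row_sq_le X j
  have h2 := col_sq_le Y j
  have hs1 : (0:ℝ) ≤ ∑ k, ‖X j k‖ ^ 2 := by positivity
  have hs2 : (0:ℝ) ≤ ∑ k, ‖Y k j‖ ^ 2 := by positivity
  have hnn : (0:ℝ) ≤ ∑ k, ‖X j k‖ * ‖Y k j‖ := by positivity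
  have hXY : (0:ℝ) ≤ ‖X‖ * ‖Y‖ := mul_nonneg (norm_nonneg _) (norm_nonneg _)
  nlinarith [norm_nonneg X, norm_nonneg Y]

theorem stmt12 (d : ℕ) (H : Matrix (Fin d) (Fin d) ℂ)
    (U : Matrix (Fin d) (Fin d) ℂ) (hU : U ∈ Matrix.unitaryGroup (Fin d) ℂ)
    (E : Fin d → ℝ) (hH : H = U * Matrix.diagonal (fun j => (E j : ℂ)) * Uᴴ)
    (Δ : ℝ) (hΔ : 0 < Δ)
    (A B C D : Matrix (Fin d) (Fin d) ℂ) :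
    ‖(1 / d : ℂ) * ∑ j : Fin d,
        ∑ k ∈ Finset.univ.filter fun k : Fin d => |E k - E j| < Δ,
          (Uᴴ * A * U) j j * (Uᴴ * B * U) j k *
            ((Uᴴ * C * U) j j - (Uᴴ * C * U) k k) * (Uᴴ * D * U) k j‖ ≤
      (opNorm B * opNorm D / d) * ∑ j : Fin d,
        ‖(Uᴴ * A * U) j j‖ *
          sSup ((fun k : Fin d => ‖(Uᴴ * C * U) j j - (Uᴴ * C * U) k k‖) ''
            {k : Fin d | |E k - E j| < Δ}) := by
  set A' := Uᴴ * A * U with hA'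
  set B' := Uᴴ * B * U with hB'
  set C' := Uᴴ * C * U with hC'
  set D' := Uᴴ * D * U with hD'
  set M : Fin d → ℝ := fun j =>
    sSup ((fun k : Fin d => ‖C' j j - C' k k‖) '' {k : Fin d | |E k - E j| < Δ})
    with hM
  have hbdd : ∀ j : Fin d, BddAbove
      ((fun k : Fin d => ‖C' j j - C' k k‖) '' {k : Fin d | |E k - E j| < Δ}) :=
    fun j => ((Set.toFinite _).image _).bddAbove
  have hMle : ∀ j k : Fin d, |E k - E j| < Δ → ‖C' j j - C' k k‖ ≤ M j :=
    fun j k hk => le_csSup (hbdd j) ⟨k, hk, rfl⟩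
  have hM0 : ∀ j : Fin d, 0 ≤ M j := fun j =>
    le_trans (norm_nonneg _) (hMle j j (by simpa using hΔ))
  -- unitary norm facts
  have hU1 : Uᴴ * U = 1 := by
    have := hU.1
    rwa [Matrix.star_eq_conjTranspose] at this
  have hone : ‖(1 : Matrix (Fin d) (Fin d) ℂ)‖ ≤ 1 := by
    rw [Matrix.cstar_norm_def, _root_.map_one]
    exact ContinuousLinearMap.norm_id_le
  have hUsq : ‖U‖ * ‖U‖ ≤ 1 := by
    rw [← Matrix.l2_opNorm_conjTranspose_mul_self, hU1]; exact hone
  have hUle : ‖U‖ ≤ 1 := by nlinarith [norm_nonneg U]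
  have hUH : ‖Uᴴ‖ ≤ 1 := by rwa [Matrix.l2_opNorm_conjTranspose]
  have hconj : ∀ X : Matrix (Fin d) (Fin d) ℂ, ‖Uᴴ * X * U‖ ≤ ‖X‖ := by
    intro X
    calc ‖Uᴴ * X * U‖ ≤ ‖Uᴴ‖ * ‖X‖ * ‖U‖ := by
          refine le_trans (Matrix.l2_opNorm_mul _ _) ?_
          exact mul_le_mul_of_nonneg_right (Matrix.l2_opNorm_mul _ _) (norm_nonneg _)
      _ ≤ 1 * ‖X‖ * 1 := by gcongr <;> first | exact norm_nonneg _ | assumption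
      _ = ‖X‖ := by ring
  -- per-j bound
  have key : ∀ j : Fin d,
      ‖∑ k ∈ Finset.univ.filter fun k : Fin d => |E k - E j| < Δ,
          A' j j * B' j k * (C' j j - C' k k) * D' k j‖
        ≤ ‖A' j j‖ * (‖B‖ * ‖D‖ * M j) := by
    intro j
    calc ‖∑ k ∈ Finset.univ.filter fun k : Fin d => |E k - E j| < Δ,
            A' j j * B' j k * (C' j j - C' k k) * D' k j‖
        ≤ ∑ k ∈ Finset.univ.filter fun k : Fin d => |E k - E j| < Δ,
            ‖A' j j * B' j k * (C' j j - C' k k) * D' k j‖ :=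
          norm_sum_le _ _
      _ ≤ ∑ k ∈ Finset.univ.filter fun k : Fin d => |E k - E j| < Δ,
            ‖A' j j‖ * (‖B' j k‖ * ‖D' k j‖) * M j := by
          refine Finset.sum_le_sum fun k hk => ?_
          rw [norm_mul, norm_mul, norm_mul]
          have hC := hMle j k (by simpa using hk)
          calc ‖A' j j‖ * ‖B' j k‖ * ‖C' j j - C' k k‖
                * ‖D' k j‖
              ≤ ‖A' j j‖ * ‖B' j k‖ * M j * ‖D' k j‖ := by
                apply mul_le_mul_of_nonneg_right _ (norm_nonneg _)
                exact mul_le_mul_of_nonneg_left hC (by positivity)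
            _ = ‖A' j j‖ * (‖B' j k‖ * ‖D' k j‖) * M j := by
                ring
      _ ≤ ∑ k : Fin d,
            ‖A' j j‖ * (‖B' j k‖ * ‖D' k j‖) * M j :=
          Finset.sum_le_sum_of_subset_of_nonneg (Finset.filter_subset _ _)
            fun k _ _ => mul_nonneg (by positivity) (hM0 j)
      _ = ‖A' j j‖ * M j *
            ∑ k : Fin d, ‖B' j k‖ * ‖D' k j‖ := by
          rw [Finset.mul_sum]; exact Finset.sum_congr rfl fun k _ => by ring
      _ ≤ ‖A' j j‖ * M j * (‖B‖ * ‖D‖) := by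
          have hcs := cs_bound B' D' j
          have hBD : ‖B'‖ * ‖D'‖ ≤ ‖B‖ * ‖D‖ :=
            mul_le_mul (hconj B) (hconj D) (norm_nonneg _) (norm_nonneg _)
          exact mul_le_mul_of_nonneg_left (hcs.trans hBD)
            (mul_nonneg (norm_nonneg _) (hM0 j))
      _ = ‖A' j j‖ * (‖B‖ * ‖D‖ * M j) := by ring
  -- assemble
  rw [norm_mul]
  have habs : ‖(1 : ℂ) / d‖ = 1 / d := by
    rw [norm_div, norm_one, Complex.norm_natCast]
  rw [habs]
  have hsum : ‖∑ j : Fin d,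
      ∑ k ∈ Finset.univ.filter fun k : Fin d => |E k - E j| < Δ,
        A' j j * B' j k * (C' j j - C' k k) * D' k j‖
      ≤ ∑ j : Fin d, ‖A' j j‖ * (‖B‖ * ‖D‖ * M j) :=
    (norm_sum_le _ _).trans (Finset.sum_le_sum fun j _ => key j)
  have hdpos : (0:ℝ) ≤ 1 / (d:ℝ) := by positivity
  calc (1 / d : ℝ) * ‖∑ j : Fin d,
        ∑ k ∈ Finset.univ.filter fun k : Fin d => |E k - E j| < Δ,
          A' j j * B' j k * (C' j j - C' k k) * D' k j‖
      ≤ (1 / d : ℝ) * ∑ j : Fin d, ‖A' j j‖ * (‖B‖ * ‖D‖ * M j) :=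
        mul_le_mul_of_nonneg_left hsum hdpos
    _ = (opNorm B * opNorm D / d) * ∑ j : Fin d, ‖A' j j‖ * M j := by
        rw [opNorm_eq_l2, opNorm_eq_l2, Finset.mul_sum, Finset.mul_sum]
        exact Finset.sum_congr rfl fun j _ => by ring
end
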